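/- (Lemma 3) Let Σ be a finite alphabet, X a nonempty string over Σ, and b, c ∈ Σ two distinct symbols. Set R = {X·b·X·c} and k = |X|+1. Then in the de Bruijn graph G_R^k: the string X is a node lying on the path of the string S = X·b·X·c; X has two distinct successors, tail(X)·b and tail(X)·c, both of which lie on the path of S and both of which are critical. Consequently, for every color-set assignment col that gives a color κ to every critical node lying on the path of S, the node X has two distinct successors whose color sets both contain κ, so the path of S is not safe for κ and the greedy κ-rule walk cannot reconstruct S unambiguously. -/

import Mathlib

/-- `W` is a k-mer of the collection `R`: a string of length `k` occurring as an
infix of some string of `R`. -/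
def isKmer {α : Type*} (R : Set (List α)) (k : ℕ) (W : List α) : Prop :=
  W.length = k ∧ ∃ S ∈ R, W <:+: S

/-- There is an edge from `u` to `v` in the de Bruijn graph `G_R^k`: some k-mer `W`
of `R` has `u = W` minus its last symbol and `v = W` minus its first symbol. -/
def hasEdge {α : Type*} (R : Set (List α)) (k : ℕ) (u v : List α) : Prop :=
  ∃ W, isKmer R k W ∧ u = W.dropLast ∧ v = W.tail

/-- `u` lies on the path of the string `S` in `G_R^k`: it is one of the 0-indexed
length-`(k-1)` windows `S[i..i+k-2]` of `S`, for `0 ≤ i ≤ |S| - k + 1`. -/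
def onPath {α : Type*} (R : Set (List α)) (k : ℕ) (S u : List α) : Prop :=
  ∃ i, i ≤ S.length - k + 1 ∧ u = (S.drop i).take (k - 1)

/-- A node is critical if it has at least one predecessor with outdegree greater
than one (i.e. with at least two distinct successors). -/
def critical {α : Type*} (R : Set (List α)) (k : ℕ) (v : List α) : Prop :=
  ∃ p, hasEdge R k p v ∧ {w | hasEdge R k p w}.Nontrivial

/-- The path of `S` in `G_R^k` is safe for the color `κ` under the color-set
assignment `col`: every node of the path with outdegree greater than one has
exactly one successor whose color set contains `κ`. -/
def safeFor {α C : Type*} (R : Set (List α)) (k : ℕ) (col : List α → Set C)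
    (κ : C) (S : List α) : Prop :=
  ∀ u, onPath R k S u → {w | hasEdge R k u w}.Nontrivial →
    ∃! w, hasEdge R k u w ∧ κ ∈ col w

/-- Lemma 3. For `R = {X·b·X·c}` with `X ≠ []`, `b ≠ c`, and
`k = |X| + 1`: the node `X` lies on the path of `S = X·b·X·c` in `G_R^k`, it has two
distinct successors `tail(X)·b` and `tail(X)·c`, both lying on the path of `S` and both
critical; consequently, for every color-set assignment giving some color `κ` to every
critical node on the path of `S`, node `X` has two distinct successors colored with `κ`,
so the path of `S` is not safe for `κ`. -/
theorem ambiguous_repeat_not_safe {α : Type*} (X : List α) (hX : X ≠ [])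
    (b c : α) (hbc : b ≠ c) (R : Set (List α)) (k : ℕ)
    (hR : R = {X ++ [b] ++ X ++ [c]}) (hk : k = X.length + 1) :
    onPath R k (X ++ [b] ++ X ++ [c]) X ∧
    hasEdge R k X (X.tail ++ [b]) ∧
    hasEdge R k X (X.tail ++ [c]) ∧
    X.tail ++ [b] ≠ X.tail ++ [c] ∧
    onPath R k (X ++ [b] ++ X ++ [c]) (X.tail ++ [b]) ∧
    onPath R k (X ++ [b] ++ X ++ [c]) (X.tail ++ [c]) ∧
    critical R k (X.tail ++ [b]) ∧
    critical R k (X.tail ++ [c]) ∧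
    (∀ (C : Type*) (col : List α → Set C) (κ : C),
      (∀ u, onPath R k (X ++ [b] ++ X ++ [c]) u → critical R k u → κ ∈ col u) →
      (κ ∈ col (X.tail ++ [b]) ∧ κ ∈ col (X.tail ++ [c])) ∧
      ¬ safeFor R k col κ (X ++ [b] ++ X ++ [c])) := by
  subst hR hk
  have hn : 1 ≤ X.length := List.length_pos_iff.mpr hX
  -- basic edge facts
  have hkmer_b : isKmer ({X ++ [b] ++ X ++ [c]} : Set (List α)) (X.length + 1) (X ++ [b]) := by
    refine ⟨by simp, X ++ [b] ++ X ++ [c], rfl, ?_⟩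
    exact ⟨[], X ++ [c], by simp⟩
  have hkmer_c : isKmer ({X ++ [b] ++ X ++ [c]} : Set (List α)) (X.length + 1) (X ++ [c]) := by
    refine ⟨by simp, X ++ [b] ++ X ++ [c], rfl, ?_⟩
    exact ⟨X ++ [b], [], by simp⟩
  have htail_b : (X ++ [b]).tail = X.tail ++ [b] := List.tail_append_of_ne_nil hX
  have htail_c : (X ++ [c]).tail = X.tail ++ [c] := List.tail_append_of_ne_nil hX
  have hedge_b : hasEdge ({X ++ [b] ++ X ++ [c]} : Set (List α)) (X.length + 1) X (X.tail ++ [b]) :=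
    ⟨X ++ [b], hkmer_b, by simp, htail_b.symm⟩
  have hedge_c : hasEdge ({X ++ [b] ++ X ++ [c]} : Set (List α)) (X.length + 1) X (X.tail ++ [c]) :=
    ⟨X ++ [c], hkmer_c, by simp, htail_c.symm⟩
  have hne : X.tail ++ [b] ≠ X.tail ++ [c] := by
    intro h
    exact hbc (by simpa using List.append_inj_right h rfl)
  -- onPath facts
  have hpX : onPath ({X ++ [b] ++ X ++ [c]} : Set (List α)) (X.length + 1)
      (X ++ [b] ++ X ++ [c]) X := by
    refine ⟨0, by simp, ?_⟩
    simp [List.take_append_of_le_length]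
  have hpb : onPath ({X ++ [b] ++ X ++ [c]} : Set (List α)) (X.length + 1)
      (X ++ [b] ++ X ++ [c]) (X.tail ++ [b]) := by
    refine ⟨1, ?_, ?_⟩
    · simp
    · have : (X ++ [b] ++ X ++ [c]).drop 1 = X.tail ++ [b] ++ X ++ [c] := by
        rw [show X ++ [b] ++ X ++ [c] = X ++ ([b] ++ X ++ [c]) by simp]
        rw [List.drop_append_of_le_length hn]
        simp
      rw [this]
      simp only [Nat.add_sub_cancel]
      rw [show X.tail ++ [b] ++ X ++ [c] = (X.tail ++ [b]) ++ (X ++ [c]) by simp]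
      rw [List.take_append_of_le_length (by simp; omega)]
      rw [List.take_of_length_le (by simp; omega)]
  have hpc : onPath ({X ++ [b] ++ X ++ [c]} : Set (List α)) (X.length + 1)
      (X ++ [b] ++ X ++ [c]) (X.tail ++ [c]) := by
    refine ⟨X.length + 2, ?_, ?_⟩
    · simp; omega
    · have : (X ++ [b] ++ X ++ [c]).drop (X.length + 2) = X.tail ++ [c] := by
        rw [show X ++ [b] ++ X ++ [c] = (X ++ [b]) ++ (X ++ [c]) by simp]
        rw [show X.length + 2 = (X ++ [b]).length + 1 by simp]
        rw [List.drop_append, List.drop_eq_nil_of_le (by simp)]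
        simpa using htail_c
      rw [this]
      simp only [Nat.add_sub_cancel]
      rw [List.take_of_length_le (by simp; omega)]
  have hnontriv : ({w | hasEdge ({X ++ [b] ++ X ++ [c]} : Set (List α)) (X.length + 1) X w}).Nontrivial :=
    ⟨X.tail ++ [b], hedge_b, X.tail ++ [c], hedge_c, hne⟩
  have hcrit_b : critical ({X ++ [b] ++ X ++ [c]} : Set (List α)) (X.length + 1) (X.tail ++ [b]) :=
    ⟨X, hedge_b, hnontriv⟩
  have hcrit_c : critical ({X ++ [b] ++ X ++ [c]} : Set (List α)) (X.length + 1) (X.tail ++ [c]) :=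
    ⟨X, hedge_c, hnontriv⟩
  refine ⟨hpX, hedge_b, hedge_c, hne, hpb, hpc, hcrit_b, hcrit_c, ?_⟩
  intro C col κ hcol
  have hκb : κ ∈ col (X.tail ++ [b]) := hcol _ hpb hcrit_b
  have hκc : κ ∈ col (X.tail ++ [c]) := hcol _ hpc hcrit_c
  refine ⟨⟨hκb, hκc⟩, ?_⟩
  intro hsafe
  obtain ⟨w, _, huniq⟩ := hsafe X hpX hnontriv
  have h1 := huniq _ ⟨hedge_b, hκb⟩
  have h2 := huniq _ ⟨hedge_c, hκc⟩
  exact hne (h1.trans h2.symm)
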